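/- Let d ≥ 1, let A, B, C be d×d complex positive semidefinite matrices and let x, y be real numbers. Then the matrix x²·tr(B·C)·A + y²·tr(B·A)·C − x·y·(A·B·C) − x·y·(C·B·A) is positive semidefinite. -/

import Mathlib

open scoped ComplexOrder

section helpers
open Matrix
open scoped MatrixOrder
set_option linter.unusedSectionVars false
variable {n : Type*} [Fintype n] [DecidableEq n]

noncomputable def Matrix.PosSemidef.sqrt {A : Matrix n n ℂ} (_hA : A.PosSemidef) : Matrix n n ℂ :=
  CFC.sqrt A

lemma Matrix.PosSemidef.posSemidef_sqrt {A : Matrix n n ℂ} (hA : A.PosSemidef) :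
    hA.sqrt.PosSemidef :=
  (CFC.sqrt_nonneg A).posSemidef

lemma Matrix.PosSemidef.sqrt_mul_self {A : Matrix n n ℂ} (hA : A.PosSemidef) :
    hA.sqrt * hA.sqrt = A :=
  CFC.sqrt_mul_sqrt_self A hA.nonneg

private lemma H0 (z : n → ℂ) :
    (star z ⬝ᵥ z).re = ∑ i, Complex.normSq (z i) := by
  simp [dotProduct, Complex.re_sum, ← Complex.normSq_eq_conj_mul_self]

private lemma H1 (u w : n → ℂ) :
    ‖star u ⬝ᵥ w‖^2 ≤ (star u ⬝ᵥ u).re * (star w ⬝ᵥ w).re := by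
  have h1 : inner ℂ ((WithLp.equiv 2 (n → ℂ)).symm u) ((WithLp.equiv 2 (n → ℂ)).symm w) = star u ⬝ᵥ w :=
    (EuclideanSpace.inner_toLp_toLp u w).trans (dotProduct_comm _ _)
  have h2 : inner ℂ ((WithLp.equiv 2 (n → ℂ)).symm u) ((WithLp.equiv 2 (n → ℂ)).symm u) = star u ⬝ᵥ u :=
    (EuclideanSpace.inner_toLp_toLp u u).trans (dotProduct_comm _ _)
  have h3 : inner ℂ ((WithLp.equiv 2 (n → ℂ)).symm w) ((WithLp.equiv 2 (n → ℂ)).symm w) = star w ⬝ᵥ w :=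
    (EuclideanSpace.inner_toLp_toLp w w).trans (dotProduct_comm _ _)
  have hcs := norm_inner_le_norm (𝕜 := ℂ) ((WithLp.equiv 2 _).symm u) ((WithLp.equiv 2 _).symm w)
  have hu := InnerProductSpace.norm_sq_eq_re_inner (𝕜 := ℂ) ((WithLp.equiv 2 (n → ℂ)).symm u)
  have hw := InnerProductSpace.norm_sq_eq_re_inner (𝕜 := ℂ) ((WithLp.equiv 2 (n → ℂ)).symm w)
  rw [h1] at hcs
  rw [h2] at hu
  rw [h3] at hw
  calc ‖star u ⬝ᵥ w‖^2
      ≤ (‖(WithLp.equiv 2 (n → ℂ)).symm u‖ * ‖(WithLp.equiv 2 (n → ℂ)).symm w‖)^2 :=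
        pow_le_pow_left₀ (norm_nonneg _) hcs 2
    _ = (star u ⬝ᵥ u).re * (star w ⬝ᵥ w).re := by
        rw [mul_pow, hu, hw]; simp [RCLike.re_to_complex]

private lemma H2 (R : Matrix n n ℂ) (s : n → ℂ) :
    (star (R *ᵥ s) ⬝ᵥ (R *ᵥ s)).re ≤ (Rᴴ * R).trace.re * (star s ⬝ᵥ s).re := by
  rw [H0]
  have key : ∀ i, Complex.normSq ((R *ᵥ s) i)
      ≤ (∑ j, Complex.normSq (R i j)) * (star s ⬝ᵥ s).re := by
    intro i
    have h := H1 (fun j => star (R i j)) s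
    have e1 : star (fun j => star (R i j)) ⬝ᵥ s = (R *ᵥ s) i := by
      simp [dotProduct, mulVec]
    have e2 : (star (fun j => star (R i j)) ⬝ᵥ (fun j => star (R i j))).re
        = ∑ j, Complex.normSq (R i j) := by
      rw [H0]; simp
    rw [e1, e2] at h
    calc Complex.normSq ((R *ᵥ s) i) = ‖(R *ᵥ s) i‖^2 := by
          rw [← Complex.sq_norm]
      _ ≤ _ := h
  calc ∑ i, Complex.normSq ((R *ᵥ s) i)
      ≤ ∑ i, (∑ j, Complex.normSq (R i j)) * (star s ⬝ᵥ s).re :=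
        Finset.sum_le_sum fun i _ => key i
    _ = (Rᴴ * R).trace.re * (star s ⬝ᵥ s).re := by
        rw [← Finset.sum_mul]
        congr 1
        rw [trace, Complex.re_sum]
        rw [Finset.sum_comm]
        refine Finset.sum_congr rfl fun i _ => ?_
        simp [Matrix.mul_apply, diag, Complex.re_sum, conjTranspose_apply,
          ← Complex.normSq_eq_conj_mul_self]

private lemma H5 {M : Matrix n n ℂ} (hM : M.PosSemidef) : 0 ≤ M.trace := by
  refine Finset.sum_nonneg fun i _ => ?_
  have h := hM.dotProduct_mulVec_nonneg (Pi.single i 1)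
  have e : star (Pi.single i (1:ℂ)) ⬝ᵥ (M *ᵥ Pi.single i 1) = M i i := by
    simp [mulVec_single, dotProduct, Pi.single_apply, Finset.sum_ite_eq']
  rwa [e] at h

private lemma conj_form (S M : Matrix n n ℂ) (hS : S.IsHermitian) (v : n → ℂ) :
    star (S *ᵥ v) ⬝ᵥ (M *ᵥ (S *ᵥ v)) = star v ⬝ᵥ ((S * M * S) *ᵥ v) := by
  simp [star_mulVec, hS.eq, dotProduct_mulVec, vecMul_vecMul, Matrix.mul_assoc]

private lemma H3 {N : Matrix n n ℂ} (hN : N.PosSemidef) (s : n → ℂ) :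
    (star s ⬝ᵥ (N *ᵥ s)).re ≤ N.trace.re * (star s ⬝ᵥ s).re := by
  obtain ⟨R, hR⟩ : ∃ R : Matrix n n ℂ, N = Rᴴ * R :=
    CStarAlgebra.nonneg_iff_eq_star_mul_self.mp hN.nonneg
  subst hR
  have e : star s ⬝ᵥ ((Rᴴ * R) *ᵥ s) = star (R *ᵥ s) ⬝ᵥ (R *ᵥ s) := by
    simp [star_mulVec, dotProduct_mulVec, vecMul_vecMul]
  rw [e]
  exact H2 R s

private lemma H4 {A B : Matrix n n ℂ} (hA : A.PosSemidef) (hB : B.PosSemidef) (v : n → ℂ) :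
    (star v ⬝ᵥ ((A * B * A) *ᵥ v)).re ≤ (B * A).trace.re * (star v ⬝ᵥ (A *ᵥ v)).re := by
  have hSh : hA.sqrt.IsHermitian := hA.posSemidef_sqrt.isHermitian
  have hS2 : hA.sqrt * hA.sqrt = A := hA.sqrt_mul_self
  have hN : (hA.sqrt * B * hA.sqrt).PosSemidef := by
    have := hB.conjTranspose_mul_mul_same hA.sqrt
    rwa [hSh.eq] at this
  have hm : hA.sqrt * (hA.sqrt * B * hA.sqrt) * hA.sqrt = A * B * A := by
    calc hA.sqrt * (hA.sqrt * B * hA.sqrt) * hA.sqrt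
        = (hA.sqrt * hA.sqrt) * B * (hA.sqrt * hA.sqrt) := by noncomm_ring
      _ = A * B * A := by rw [hS2]
  have e1 : star v ⬝ᵥ ((A * B * A) *ᵥ v)
      = star (hA.sqrt *ᵥ v) ⬝ᵥ ((hA.sqrt * B * hA.sqrt) *ᵥ (hA.sqrt *ᵥ v)) := by
    rw [conj_form _ _ hSh v, hm]
  have e2 : star v ⬝ᵥ (A *ᵥ v) = star (hA.sqrt *ᵥ v) ⬝ᵥ (hA.sqrt *ᵥ v) := by
    simp only [star_mulVec, hSh.eq, dotProduct_mulVec, vecMul_vecMul, hS2]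
  have etr : (hA.sqrt * B * hA.sqrt).trace = (B * A).trace := by
    rw [Matrix.trace_mul_cycle, hS2, Matrix.trace_mul_comm]
  rw [e1, e2, ← etr]
  exact H3 hN (hA.sqrt *ᵥ v)

private lemma H6 {B C : Matrix n n ℂ} (hB : B.PosSemidef) (hC : C.PosSemidef) :
    0 ≤ (B * C).trace := by
  have hSh : hB.sqrt.IsHermitian := hB.posSemidef_sqrt.isHermitian
  have hS2 : hB.sqrt * hB.sqrt = B := hB.sqrt_mul_self
  have hN : (hB.sqrt * C * hB.sqrt).PosSemidef := by
    have := hC.conjTranspose_mul_mul_same hB.sqrt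
    rwa [hSh.eq] at this
  have etr : (hB.sqrt * C * hB.sqrt).trace = (B * C).trace := by
    rw [Matrix.trace_mul_cycle, hS2]
  rw [← etr]
  exact H5 hN

private lemma form_star (M : Matrix n n ℂ) (v : n → ℂ) :
    star (star v ⬝ᵥ (M *ᵥ v)) = star v ⬝ᵥ (Mᴴ *ᵥ v) := by
  conv_lhs => rw [← star_dotProduct (M *ᵥ v) v, star_mulVec, ← dotProduct_mulVec]

private lemma dform (M N : Matrix n n ℂ) (v : n → ℂ) :
    star (M *ᵥ v) ⬝ᵥ (N *ᵥ v) = star v ⬝ᵥ ((Mᴴ * N) *ᵥ v) := by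
  simp [star_mulVec, dotProduct_mulVec, vecMul_vecMul]

end helpers

theorem positivity_lemma (d : ℕ) (hd : 1 ≤ d)
    (A B C : Matrix (Fin d) (Fin d) ℂ)
    (hA : A.PosSemidef) (hB : B.PosSemidef) (hC : C.PosSemidef)
    (x y : ℝ) :
    (((x : ℂ)^2 * (B * C).trace) • A + ((y : ℂ)^2 * (B * A).trace) • C
      - ((x : ℂ) * (y : ℂ)) • (A * B * C) - ((x : ℂ) * (y : ℂ)) • (C * B * A)).PosSemidef := by
  open Matrix in
  have hp : (0:ℂ) ≤ (B * C).trace := H6 hB hC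
  have hq : (0:ℂ) ≤ (B * A).trace := H6 hB hA
  have hpim : (B * C).trace.im = 0 := (Complex.nonneg_iff.mp hp).2.symm
  have hqim : (B * A).trace.im = 0 := (Complex.nonneg_iff.mp hq).2.symm
  have hpr : 0 ≤ (B * C).trace.re := (Complex.nonneg_iff.mp hp).1
  have hqr : 0 ≤ (B * A).trace.re := (Complex.nonneg_iff.mp hq).1
  have hABC : (A * B * C)ᴴ = C * B * A := by
    rw [Matrix.conjTranspose_mul, Matrix.conjTranspose_mul, hA.1.eq, hB.1.eq, hC.1.eq,
      ← Matrix.mul_assoc]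
  have hCBA : (C * B * A)ᴴ = A * B * C := by
    rw [Matrix.conjTranspose_mul, Matrix.conjTranspose_mul, hA.1.eq, hB.1.eq, hC.1.eq,
      ← Matrix.mul_assoc]
  have hstarp : star (B * C).trace = (B * C).trace :=
    Complex.conj_eq_iff_im.mpr hpim
  have hstarq : star (B * A).trace = (B * A).trace :=
    Complex.conj_eq_iff_im.mpr hqim
  refine Matrix.PosSemidef.of_dotProduct_mulVec_nonneg ?_ fun v => ?_
  · show _ = _
    simp only [Matrix.conjTranspose_sub, Matrix.conjTranspose_add, Matrix.conjTranspose_smul,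
      hABC, hCBA, star_mul', star_pow, Complex.star_def, Complex.conj_ofReal, hstarp, hstarq]
    rw [hA.1.eq, hC.1.eq, sub_right_comm]
  · -- quadratic form
    set S := hB.sqrt with hSdef
    have hSh : S.IsHermitian := hB.posSemidef_sqrt.isHermitian
    have hS2 : S * S = B := hB.sqrt_mul_self
    have ha : (0:ℂ) ≤ star v ⬝ᵥ (A *ᵥ v) := hA.dotProduct_mulVec_nonneg v
    have hc : (0:ℂ) ≤ star v ⬝ᵥ (C *ᵥ v) := hC.dotProduct_mulVec_nonneg v
    have haim : (star v ⬝ᵥ (A *ᵥ v)).im = 0 := (Complex.nonneg_iff.mp ha).2.symm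
    have hcim : (star v ⬝ᵥ (C *ᵥ v)).im = 0 := (Complex.nonneg_iff.mp hc).2.symm
    have har : 0 ≤ (star v ⬝ᵥ (A *ᵥ v)).re := (Complex.nonneg_iff.mp ha).1
    have hcr : 0 ≤ (star v ⬝ᵥ (C *ᵥ v)).re := (Complex.nonneg_iff.mp hc).1
    set t := star v ⬝ᵥ ((A * B * C) *ᵥ v) with htdef
    have ht' : star v ⬝ᵥ ((C * B * A) *ᵥ v) = star t := by
      rw [htdef, form_star, hABC]
    -- Cauchy-Schwarz
    have hm1 : (S * A)ᴴ * (S * C) = A * B * C := by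
      rw [Matrix.conjTranspose_mul, hSh.eq, hA.1.eq]
      calc A * S * (S * C) = A * (S * S) * C := by noncomm_ring
        _ = A * B * C := by rw [hS2]
    have hm2 : (S * A)ᴴ * (S * A) = A * B * A := by
      rw [Matrix.conjTranspose_mul, hSh.eq, hA.1.eq]
      calc A * S * (S * A) = A * (S * S) * A := by noncomm_ring
        _ = A * B * A := by rw [hS2]
    have hm3 : (S * C)ᴴ * (S * C) = C * B * C := by
      rw [Matrix.conjTranspose_mul, hSh.eq, hC.1.eq]
      calc C * S * (S * C) = C * (S * S) * C := by noncomm_ring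
        _ = C * B * C := by rw [hS2]
    have hcs := H1 ((S * A) *ᵥ v) ((S * C) *ᵥ v)
    rw [dform, dform, dform, hm1, hm2, hm3] at hcs
    have hbound1 := H4 hA hB v
    have hbound2 := H4 hC hB v
    have hq1 : (0:ℂ) ≤ star v ⬝ᵥ ((A * B * A) *ᵥ v) := by
      have h := (Matrix.posSemidef_conjTranspose_mul_self (S * A)).dotProduct_mulVec_nonneg v
      rwa [hm2] at h
    have hc1 : (0:ℂ) ≤ star v ⬝ᵥ ((C * B * C) *ᵥ v) := by
      have h := (Matrix.posSemidef_conjTranspose_mul_self (S * C)).dotProduct_mulVec_nonneg v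
      rwa [hm3] at h
    have hABAre : 0 ≤ (star v ⬝ᵥ ((A * B * A) *ᵥ v)).re := (Complex.nonneg_iff.mp hq1).1
    have htsq : ‖t‖^2 ≤ ((B * A).trace.re * (star v ⬝ᵥ (A *ᵥ v)).re)
        * ((B * C).trace.re * (star v ⬝ᵥ (C *ᵥ v)).re) := by
      refine hcs.trans ?_
      exact mul_le_mul hbound1 hbound2 (Complex.nonneg_iff.mp hc1).1 (by positivity)
    -- expansion of the quadratic form
    have hexp : star v ⬝ᵥ ((((x : ℂ)^2 * (B * C).trace) • A + ((y : ℂ)^2 * (B * A).trace) • C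
        - ((x : ℂ) * (y : ℂ)) • (A * B * C) - ((x : ℂ) * (y : ℂ)) • (C * B * A)) *ᵥ v)
        = ((x : ℂ)^2 * (B * C).trace) * (star v ⬝ᵥ (A *ᵥ v))
          + ((y : ℂ)^2 * (B * A).trace) * (star v ⬝ᵥ (C *ᵥ v))
          - ((x : ℂ) * (y : ℂ)) * t - ((x : ℂ) * (y : ℂ)) * (star t) := by
      simp only [Matrix.add_mulVec, Matrix.sub_mulVec, Matrix.smul_mulVec,
        dotProduct_add, dotProduct_sub, dotProduct_smul, smul_eq_mul, htdef, ht']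
    rw [hexp]
    -- turn into a real statement
    have hpa : (B * C).trace = ((B * C).trace.re : ℂ) := by
      rw [← Complex.re_add_im (B * C).trace, hpim]; simp
    have hqa : (B * A).trace = ((B * A).trace.re : ℂ) := by
      rw [← Complex.re_add_im (B * A).trace, hqim]; simp
    have haa : star v ⬝ᵥ (A *ᵥ v) = ((star v ⬝ᵥ (A *ᵥ v)).re : ℂ) := by
      rw [← Complex.re_add_im (star v ⬝ᵥ (A *ᵥ v)), haim]; simp
    have hca : star v ⬝ᵥ (C *ᵥ v) = ((star v ⬝ᵥ (C *ᵥ v)).re : ℂ) := by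
      rw [← Complex.re_add_im (star v ⬝ᵥ (C *ᵥ v)), hcim]; simp
    have hts : t + star t = ((2 * t.re : ℝ) : ℂ) := by
      rw [Complex.star_def, Complex.add_conj]
    have hreal : ((x : ℂ)^2 * (B * C).trace) * (star v ⬝ᵥ (A *ᵥ v))
          + ((y : ℂ)^2 * (B * A).trace) * (star v ⬝ᵥ (C *ᵥ v))
          - ((x : ℂ) * (y : ℂ)) * t - ((x : ℂ) * (y : ℂ)) * (star t)
        = ((x^2 * ((B * C).trace.re * (star v ⬝ᵥ (A *ᵥ v)).re)
            + y^2 * ((B * A).trace.re * (star v ⬝ᵥ (C *ᵥ v)).re)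
            - x * y * (2 * t.re) : ℝ) : ℂ) := by
      rw [sub_sub, ← mul_add, hts, hpa, hqa, haa, hca]
      push_cast
      simp only [Complex.ofReal_re]
      ring
    rw [hreal, Complex.zero_le_real]
    -- now pure real arithmetic
    set pa := (B * C).trace.re * (star v ⬝ᵥ (A *ᵥ v)).re with hpadef
    set qc := (B * A).trace.re * (star v ⬝ᵥ (C *ᵥ v)).re with hqcdef
    have hpa0 : 0 ≤ pa := by positivity
    have hqc0 : 0 ≤ qc := by positivity
    have habs : |t.re| ≤ ‖t‖ := by
      exact Complex.abs_re_le_norm t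
    have hnorm : ‖t‖ ≤ Real.sqrt pa * Real.sqrt qc := by
      have h2 : ‖t‖^2 ≤ qc * pa := by
        calc ‖t‖^2 ≤ ((B * A).trace.re * (star v ⬝ᵥ (A *ᵥ v)).re)
            * ((B * C).trace.re * (star v ⬝ᵥ (C *ᵥ v)).re) := htsq
          _ = qc * pa := by rw [hpadef, hqcdef]; ring
      have h1 : ‖t‖ ≤ Real.sqrt (qc * pa) := by
        calc ‖t‖ = Real.sqrt (‖t‖^2) := (Real.sqrt_sq (norm_nonneg t)).symm
          _ ≤ Real.sqrt (qc * pa) := Real.sqrt_le_sqrt h2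
      refine h1.trans_eq ?_
      rw [mul_comm qc pa, Real.sqrt_mul hpa0]
    set X := |x| * Real.sqrt pa with hXdef
    set Y := |y| * Real.sqrt qc with hYdef
    have hX2 : X^2 = x^2 * pa := by
      rw [hXdef, mul_pow, sq_abs, Real.sq_sqrt hpa0]
    have hY2 : Y^2 = y^2 * qc := by
      rw [hYdef, mul_pow, sq_abs, Real.sq_sqrt hqc0]
    have hXY : x * y * (2 * t.re) ≤ 2 * (X * Y) := by
      calc x * y * (2 * t.re) ≤ |x * y * (2 * t.re)| := le_abs_self _
        _ = 2 * (|x| * |y| * |t.re|) := by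
            rw [abs_mul, abs_mul, abs_mul]; simp [abs_two]; ring
        _ ≤ 2 * (|x| * |y| * ‖t‖) :=
            mul_le_mul_of_nonneg_left
              (mul_le_mul_of_nonneg_left habs (by positivity)) (by norm_num)
        _ ≤ 2 * (|x| * |y| * (Real.sqrt pa * Real.sqrt qc)) :=
            mul_le_mul_of_nonneg_left
              (mul_le_mul_of_nonneg_left hnorm (by positivity)) (by norm_num)
        _ = 2 * (X * Y) := by rw [hXdef, hYdef]; ring
    have hexp2 : (X - Y)^2 = X^2 - 2 * (X * Y) + Y^2 := by ring
    linarith [sq_nonneg (X - Y), hexp2, hX2, hY2, hXY]
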